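/- Let W be a real normed vector space and Vₕ ⊆ W a linear subspace. Let A, Aₕ : W × W → ℝ be bilinear forms and let α > 0 and M, Mₕ ≥ 0 be constants such that |A(v,w)| ≤ M‖v‖‖w‖ for all v, w ∈ W, |Aₕ(v,w)| ≤ Mₕ‖v‖‖w‖ for all v, w ∈ W, and Aₕ(vₕ,vₕ) ≥ α‖vₕ‖² for all vₕ ∈ Vₕ. Let f, fₕ : W → ℝ be linear, let u ∈ W, and let uₕ ∈ Vₕ satisfy Aₕ(uₕ,wₕ) = fₕ(wₕ) for all wₕ ∈ Vₕ. Then there exists a constant C > 0, depending only on α, M and Mₕ, such that: for all vₕ ∈ Vₕ, all p ∈ W, and all E₁, E₂, E₃ ≥ 0 satisfying |fₕ(wₕ) − f(wₕ)| ≤ E₁‖wₕ‖, |A(p,wₕ) − Aₕ(p,wₕ)| ≤ E₂‖wₕ‖, and |A(u,wₕ) − f(wₕ)| ≤ E₃‖wₕ‖ for every wₕ ∈ Vₕ, one has ‖u − uₕ‖ ≤ C(‖u − vₕ‖ + ‖u − p‖ + E₁ + E₂ + E₃). -/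

import Mathlib

set_option maxHeartbeats 1000000 in
/-- Abstract Strang-type a priori error bound for (conforming or nonconforming)
virtual element methods. -/
theorem statement8 (W : Type*) [NormedAddCommGroup W] [NormedSpace ℝ W]
    (Vh : Submodule ℝ W)
    (A Ah : W →ₗ[ℝ] W →ₗ[ℝ] ℝ)
    (α M Mh : ℝ) (hα : 0 < α) (hM : 0 ≤ M) (hMh : 0 ≤ Mh)
    (hAcont : ∀ v w : W, |A v w| ≤ M * ‖v‖ * ‖w‖)
    (hAhcont : ∀ v w : W, |Ah v w| ≤ Mh * ‖v‖ * ‖w‖)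
    (hcoer : ∀ vh ∈ Vh, α * ‖vh‖^2 ≤ Ah vh vh)
    (f fh : W →ₗ[ℝ] ℝ)
    (u uh : W) (huh : uh ∈ Vh)
    (hsol : ∀ wh ∈ Vh, Ah uh wh = fh wh) :
    ∃ C > 0, ∀ vh ∈ Vh, ∀ p : W, ∀ E₁ E₂ E₃ : ℝ,
      0 ≤ E₁ → 0 ≤ E₂ → 0 ≤ E₃ →
      (∀ wh ∈ Vh, |fh wh - f wh| ≤ E₁ * ‖wh‖) →
      (∀ wh ∈ Vh, |A p wh - Ah p wh| ≤ E₂ * ‖wh‖) →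
      (∀ wh ∈ Vh, |A u wh - f wh| ≤ E₃ * ‖wh‖) →
      ‖u - uh‖ ≤ C * (‖u - vh‖ + ‖u - p‖ + E₁ + E₂ + E₃) := by
  refine ⟨1 + (1 + M + 2 * Mh) / α, by positivity, ?_⟩
  intro vh hvh p E₁ E₂ E₃ hE₁ hE₂ hE₃ h1 h2 h3
  set δ : W := uh - vh with hδdef
  have hδmem : δ ∈ Vh := Vh.sub_mem huh hvh
  have hn : (0:ℝ) ≤ ‖δ‖ := norm_nonneg _
  -- key energy estimate
  have hcoerδ : α * ‖δ‖^2 ≤ Ah δ δ := hcoer δ hδmem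
  have hsplit : Ah δ δ = (fh δ - f δ) + (f δ - A u δ) + (A u δ - A p δ)
      + (A p δ - Ah p δ) + (Ah p δ - Ah vh δ) := by
    have h1' : Ah uh δ = fh δ := hsol δ hδmem
    have : Ah δ δ = Ah uh δ - Ah vh δ := by
      rw [hδdef, show Ah (uh - vh) = Ah uh - Ah vh from map_sub Ah uh vh,
        LinearMap.sub_apply]
    rw [this, h1']; ring
  have b1 : fh δ - f δ ≤ E₁ * ‖δ‖ := le_trans (le_abs_self _) (h1 δ hδmem)
  have b2 : f δ - A u δ ≤ E₃ * ‖δ‖ := by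
    have := h3 δ hδmem
    have := neg_abs_le (A u δ - f δ)
    linarith [h3 δ hδmem, neg_abs_le (A u δ - f δ), abs_nonneg (A u δ - f δ)]
  have b3 : A u δ - A p δ ≤ M * ‖u - p‖ * ‖δ‖ := by
    have h := hAcont (u - p) δ
    have heq : A (u - p) δ = A u δ - A p δ := by
      rw [show A (u - p) = A u - A p from map_sub A u p, LinearMap.sub_apply]
    calc A u δ - A p δ = A (u - p) δ := heq.symm
      _ ≤ |A (u - p) δ| := le_abs_self _
      _ ≤ M * ‖u - p‖ * ‖δ‖ := h
  have b4 : A p δ - Ah p δ ≤ E₂ * ‖δ‖ := le_trans (le_abs_self _) (h2 δ hδmem)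
  have b5 : Ah p δ - Ah vh δ ≤ Mh * (‖u - p‖ + ‖u - vh‖) * ‖δ‖ := by
    have h := hAhcont (p - vh) δ
    have heq : Ah (p - vh) δ = Ah p δ - Ah vh δ := by
      rw [show Ah (p - vh) = Ah p - Ah vh from map_sub Ah p vh, LinearMap.sub_apply]
    have htri : ‖p - vh‖ ≤ ‖u - p‖ + ‖u - vh‖ := by
      calc ‖p - vh‖ = ‖-(u - p) + (u - vh)‖ := by congr 1; abel
        _ ≤ ‖-(u - p)‖ + ‖u - vh‖ := norm_add_le _ _
        _ = ‖u - p‖ + ‖u - vh‖ := by rw [norm_neg]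
    calc Ah p δ - Ah vh δ = Ah (p - vh) δ := heq.symm
      _ ≤ |Ah (p - vh) δ| := le_abs_self _
      _ ≤ Mh * ‖p - vh‖ * ‖δ‖ := h
      _ ≤ Mh * (‖u - p‖ + ‖u - vh‖) * ‖δ‖ := by
          apply mul_le_mul_of_nonneg_right _ hn
          exact mul_le_mul_of_nonneg_left htri hMh
  set K : ℝ := E₁ + E₂ + E₃ + (M + Mh) * ‖u - p‖ + Mh * ‖u - vh‖ with hK
  have hKnn : 0 ≤ K := by positivity
  have hquad : α * ‖δ‖^2 ≤ K * ‖δ‖ := by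
    have : α * ‖δ‖^2 ≤ (fh δ - f δ) + (f δ - A u δ) + (A u δ - A p δ)
      + (A p δ - Ah p δ) + (Ah p δ - Ah vh δ) := hsplit ▸ hcoerδ
    nlinarith [this, b1, b2, b3, b4, b5]
  have hlin : α * ‖δ‖ ≤ K := by
    rcases eq_or_lt_of_le hn with h0 | h0
    · rw [← h0]; simpa using hKnn
    · have := (mul_le_mul_iff_left₀ h0).mp (by nlinarith : (α * ‖δ‖) * ‖δ‖ ≤ K * ‖δ‖)
      exact this
  have htri2 : ‖u - uh‖ ≤ ‖u - vh‖ + ‖δ‖ := by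
    calc ‖u - uh‖ = ‖(u - vh) + -δ‖ := by rw [hδdef]; congr 1; abel
      _ ≤ ‖u - vh‖ + ‖-δ‖ := norm_add_le _ _
      _ = ‖u - vh‖ + ‖δ‖ := by rw [norm_neg]
  have hδle : ‖δ‖ ≤ K / α := (le_div_iff₀ hα).mpr (by linarith [hlin, mul_comm α ‖δ‖])
  have hfinal : ‖u - uh‖ ≤ ‖u - vh‖ + K / α := le_trans htri2 (by linarith)
  rw [← mul_le_mul_iff_right₀ hα]
  have hdiv : α * (K / α) = K := by field_simp
  have h2' := mul_le_mul_of_nonneg_left hfinal hα.le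
  rw [mul_add, hdiv, hK] at h2'
  have np := norm_nonneg (u - p)
  have nv := norm_nonneg (u - vh)
  have hc : α * (1 + (1 + M + 2 * Mh) / α) = α + (1 + M + 2 * Mh) := by
    field_simp
  rw [← mul_assoc, hc]
  nlinarith [h2', mul_nonneg hα.le np, mul_nonneg hα.le hE₁, mul_nonneg hα.le hE₂,
    mul_nonneg hα.le hE₃, mul_nonneg hM nv, mul_nonneg hM hE₁, mul_nonneg hM hE₂,
    mul_nonneg hM hE₃, mul_nonneg hMh nv, mul_nonneg hMh np, mul_nonneg hMh hE₁,
    mul_nonneg hMh hE₂, mul_nonneg hMh hE₃, mul_nonneg hM np]
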